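/- Let m ≥ 1 and let φ_0,…,φ_{m-1} and ψ_1,…,ψ_m be nonnegative reals. Define Θ_m = ∑_{k=1}^m ∑_{i=0}^{k-1} (1/(i+2)) φ_i^{1/2} ψ_{k-i}^{1/2} ψ_k^{1/2}, Φ_m = ∑_{k=0}^{m-1} φ_k (extended by φ_m ≥ 0 if desired), and Ψ_m = ∑_{k=1}^m ψ_k. Then Θ_m ≤ Φ_m^{1/2} Ψ_m, where Φ_m = ∑_{i=0}^{m} φ_i with φ_m ≥ 0 arbitrary nonnegative. -/
import Mathlib


open Finset

private lemma sum_inv_sq_le (n : ℕ) :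
    ∑ i ∈ range n, (1 / ((i : ℝ) + 2)) ^ 2 ≤ 1 - 1 / ((n : ℝ) + 1) := by
  induction n with
  | zero => simp
  | succ n ih =>
    rw [Finset.sum_range_succ]
    have h1 : (0 : ℝ) < (n : ℝ) + 1 := by positivity
    have key : (1 / ((n : ℝ) + 2)) ^ 2 ≤ 1 / ((n : ℝ) + 1) - 1 / ((n : ℝ) + 2) := by
      rw [div_sub_div _ _ (ne_of_gt h1) (by positivity), div_pow]
      rw [div_le_div_iff₀ (by positivity) (by positivity)]
      nlinarith [sq_nonneg ((n : ℝ) + 2)]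
    push_cast
    rw [show ((n:ℝ) + 1 + 1) = (n:ℝ) + 2 by ring]
    linarith

private lemma swap_bound (m : ℕ) (ψ : ℕ → ℝ) (hψ : ∀ k, 0 ≤ ψ k) :
    ∑ k ∈ Icc 1 m, ∑ i ∈ range k, (1 / ((i : ℝ) + 2)) ^ 2 * ψ (k - i)
      ≤ ∑ k ∈ Icc 1 m, ψ k := by
  have step1 : ∀ k ∈ Icc 1 m, ∑ i ∈ range k, (1 / ((i : ℝ) + 2)) ^ 2 * ψ (k - i)
      = ∑ j ∈ Icc 1 k, (1 / (((k - j : ℕ) : ℝ) + 2)) ^ 2 * ψ j := by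
    intro k hk
    simp only [mem_Icc] at hk
    refine Finset.sum_nbij' (fun i => k - i) (fun j => k - j) ?_ ?_ ?_ ?_ ?_
    · intro i hi; simp only [mem_range] at hi; simp only [mem_Icc]; omega
    · intro j hj; simp only [mem_Icc] at hj; simp only [mem_range]; omega
    · intro i hi; simp only [mem_range] at hi; show k - (k - i) = i; omega
    · intro j hj; simp only [mem_Icc] at hj; show k - (k - j) = j; omega
    · intro i hi
      simp only [mem_range] at hi
      rw [show k - (k - i) = i by omega]
  rw [Finset.sum_congr rfl step1]
  rw [Finset.sum_comm' (t' := Icc 1 m) (s' := fun j => Icc j m)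
    (by intro k j; simp only [mem_Icc]; omega)]
  apply Finset.sum_le_sum
  intro j hj
  simp only [mem_Icc] at hj
  have hcoef : ∑ k ∈ Icc j m, (1 / (((k - j : ℕ) : ℝ) + 2)) ^ 2 ≤ 1 := by
    rw [show Icc j m = Ico j (m + 1) by rw [Finset.Ico_add_one_right_eq_Icc],
      Finset.sum_Ico_eq_sum_range]
    have h := sum_inv_sq_le (m + 1 - j)
    have : ∑ i ∈ range (m + 1 - j), (1 / (((j + i - j : ℕ) : ℝ) + 2)) ^ 2
        = ∑ i ∈ range (m + 1 - j), (1 / ((i : ℝ) + 2)) ^ 2 := by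
      apply Finset.sum_congr rfl; intro i _; rw [Nat.add_sub_cancel_left]
    rw [this]
    have hpos : 0 < ((m + 1 - j : ℕ) : ℝ) + 1 := by positivity
    have : 0 ≤ 1 / (((m + 1 - j : ℕ) : ℝ) + 1) := by positivity
    linarith
  calc ∑ k ∈ Icc j m, (1 / (((k - j : ℕ) : ℝ) + 2)) ^ 2 * ψ j
      = (∑ k ∈ Icc j m, (1 / (((k - j : ℕ) : ℝ) + 2)) ^ 2) * ψ j := by
        rw [Finset.sum_mul]
    _ ≤ 1 * ψ j := by
        apply mul_le_mul_of_nonneg_right hcoef (hψ j)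
    _ = ψ j := one_mul _

/-- Bando's double-sum Cauchy–Schwarz estimate: `Θ_m ≤ Φ_m^{1/2} Ψ_m`. -/
theorem theta_le_sqrt_phi_mul_psi (m : ℕ) (hm : 1 ≤ m)
    (φ ψ : ℕ → ℝ) (hφ : ∀ i, 0 ≤ φ i) (hψ : ∀ k, 0 ≤ ψ k) :
    ∑ k ∈ Icc 1 m, ∑ i ∈ range k,
        (1 / ((i : ℝ) + 2)) * Real.sqrt (φ i) * Real.sqrt (ψ (k - i)) * Real.sqrt (ψ k)
      ≤ Real.sqrt (∑ i ∈ range (m + 1), φ i) * ∑ k ∈ Icc 1 m, ψ k := by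
  set Φ := ∑ i ∈ range (m + 1), φ i with hΦdef
  have hΦ : 0 ≤ Φ := Finset.sum_nonneg fun i _ => hφ i
  set S : ℕ → ℝ := fun k => ∑ i ∈ range k, (1 / ((i : ℝ) + 2)) ^ 2 * ψ (k - i) with hS
  have hSnn : ∀ k, 0 ≤ S k := fun k =>
    Finset.sum_nonneg fun i _ => mul_nonneg (by positivity) (hψ _)
  -- Step 1: inner Cauchy–Schwarz
  have step1 : ∀ k ∈ Icc 1 m,
      ∑ i ∈ range k, (1 / ((i : ℝ) + 2)) * Real.sqrt (φ i) * Real.sqrt (ψ (k - i))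
          * Real.sqrt (ψ k)
      ≤ Real.sqrt Φ * Real.sqrt (S k) * Real.sqrt (ψ k) := by
    intro k hk
    simp only [mem_Icc] at hk
    rw [← Finset.sum_mul]
    apply mul_le_mul_of_nonneg_right _ (Real.sqrt_nonneg _)
    have rewr : ∀ i ∈ range k,
        (1 / ((i : ℝ) + 2)) * Real.sqrt (φ i) * Real.sqrt (ψ (k - i))
        = Real.sqrt (φ i) * Real.sqrt ((1 / ((i : ℝ) + 2)) ^ 2 * ψ (k - i)) := by
      intro i _
      rw [Real.sqrt_mul (by positivity), Real.sqrt_sq (by positivity)]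
      ring
    rw [Finset.sum_congr rfl rewr]
    calc ∑ i ∈ range k, Real.sqrt (φ i) * Real.sqrt ((1 / ((i : ℝ) + 2)) ^ 2 * ψ (k - i))
        ≤ Real.sqrt (∑ i ∈ range k, φ i) * Real.sqrt (S k) :=
          Real.sum_sqrt_mul_sqrt_le _ hφ (fun i => mul_nonneg (by positivity) (hψ _))
      _ ≤ Real.sqrt Φ * Real.sqrt (S k) := by
          apply mul_le_mul_of_nonneg_right _ (Real.sqrt_nonneg _)
          apply Real.sqrt_le_sqrt
          apply Finset.sum_le_sum_of_subset_of_nonneg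
          · exact Finset.range_subset_range.mpr (by omega)
          · intro i _ _; exact hφ i
  -- Step 2: outer Cauchy–Schwarz
  calc ∑ k ∈ Icc 1 m, ∑ i ∈ range k,
        (1 / ((i : ℝ) + 2)) * Real.sqrt (φ i) * Real.sqrt (ψ (k - i)) * Real.sqrt (ψ k)
      ≤ ∑ k ∈ Icc 1 m, Real.sqrt Φ * Real.sqrt (S k) * Real.sqrt (ψ k) :=
        Finset.sum_le_sum step1
    _ = Real.sqrt Φ * ∑ k ∈ Icc 1 m, Real.sqrt (ψ k) * Real.sqrt (S k) := by
        rw [Finset.mul_sum]; apply Finset.sum_congr rfl; intro k _; ring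
    _ ≤ Real.sqrt Φ * (Real.sqrt (∑ k ∈ Icc 1 m, ψ k) * Real.sqrt (∑ k ∈ Icc 1 m, S k)) := by
        apply mul_le_mul_of_nonneg_left _ (Real.sqrt_nonneg _)
        exact Real.sum_sqrt_mul_sqrt_le _ hψ hSnn
    _ ≤ Real.sqrt Φ * (Real.sqrt (∑ k ∈ Icc 1 m, ψ k) * Real.sqrt (∑ k ∈ Icc 1 m, ψ k)) := by
        apply mul_le_mul_of_nonneg_left _ (Real.sqrt_nonneg _)
        apply mul_le_mul_of_nonneg_left _ (Real.sqrt_nonneg _)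
        exact Real.sqrt_le_sqrt (swap_bound m ψ hψ)
    _ = Real.sqrt Φ * ∑ k ∈ Icc 1 m, ψ k := by
        rw [Real.mul_self_sqrt (Finset.sum_nonneg fun k _ => hψ k)]
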